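/- arXiv:2305.02377 — 2 statements merged into one kernel-verified Lean document; each statement's English description precedes it below -/
import Mathlib

section
/- Let n ≥ 2 and let (X_t)_{t≥1} be an i.i.d. sequence of random variables, each uniformly distributed on the 2-element subsets of Fin n. Fix an agent a ∈ Fin n and let T be the least t such that a ∈ X_t. Then the probability of the event {T < ∞ and for all s < T, X_s ∩ X_T = ∅} equals (n−1)/(2n−3), which is strictly greater than 1/2. -/
set_option linter.unusedSectionVars false
set_option linter.unusedVariables false
set_option maxHeartbeats 1000000

open MeasureTheory ProbabilityTheory
open scoped ENNReal

section Aux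
variable {n : ℕ} {Ω : Type*} [MeasurableSpace Ω] (P : Measure Ω) [IsProbabilityMeasure P]
  [MeasurableSpace (Finset (Fin n))] [MeasurableSingletonClass (Finset (Fin n))]
  (X : ℕ → Ω → Finset (Fin n))

lemma aux_upper
    (hunif : ∀ t (s : Finset (Fin n)), s.card = 2 → P {ω | X t ω = s} = 1 / (n.choose 2 : ℝ≥0∞))
    (s : ℕ) (F : Finset (Finset (Fin n))) (hF : ∀ q ∈ F, q.card = 2) :
    P {ω | X s ω ∈ F} ≤ F.card / (n.choose 2 : ℝ≥0∞) := by
  have hset : {ω | X s ω ∈ F} = ⋃ q ∈ F, {ω | X s ω = q} := by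
    ext ω; simp
  rw [hset]
  refine le_trans (measure_biUnion_finset_le _ _) ?_
  rw [Finset.sum_congr rfl fun q hq => hunif s q (hF q hq), Finset.sum_const, nsmul_eq_mul,
    mul_one_div]

lemma aux_one (hn : n.choose 2 ≠ 0)
    (hcard : ∀ t ω, (X t ω).card = 2)
    (hunif : ∀ t (s : Finset (Fin n)), s.card = 2 → P {ω | X t ω = s} = 1 / (n.choose 2 : ℝ≥0∞))
    (s : ℕ) (F : Finset (Finset (Fin n))) (hF : ∀ q ∈ F, q.card = 2) :
    P {ω | X s ω ∈ F} = F.card / (n.choose 2 : ℝ≥0∞) := by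
  set κ : ℝ≥0∞ := (n.choose 2 : ℝ≥0∞) with hκ
  have hκ0 : κ ≠ 0 := by simpa [hκ] using hn
  have hκt : κ ≠ ⊤ := by simp [hκ]
  refine le_antisymm (aux_upper P X hunif s F hF) ?_
  set G : Finset (Finset (Fin n)) := (Finset.univ : Finset (Fin n)).powersetCard 2 \ F with hG
  have hFP : F ⊆ (Finset.univ : Finset (Fin n)).powersetCard 2 := fun q hq =>
    Finset.mem_powersetCard_univ.2 (hF q hq)
  have hGF : ∀ q ∈ G, q.card = 2 := fun q hq =>
    Finset.mem_powersetCard_univ.1 (Finset.mem_sdiff.1 hq).1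
  have hcardP : ((Finset.univ : Finset (Fin n)).powersetCard 2).card = n.choose 2 := by
    simp [Finset.card_powersetCard]
  have hGcard : G.card = n.choose 2 - F.card := by
    rw [hG, Finset.card_sdiff_of_subset hFP, hcardP]
  have hcover : (1 : ℝ≥0∞) ≤ P {ω | X s ω ∈ F} + ((G.card : ℝ≥0∞) / κ) := by
    have hsub : (Set.univ : Set Ω) ⊆ {ω | X s ω ∈ F} ∪ {ω | X s ω ∈ G} := by
      intro ω _
      by_cases h : X s ω ∈ F
      · exact Or.inl h
      · exact Or.inr (Finset.mem_sdiff.2 ⟨Finset.mem_powersetCard_univ.2 (hcard s ω), h⟩)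
    calc (1 : ℝ≥0∞) = P Set.univ := (measure_univ).symm
      _ ≤ P ({ω | X s ω ∈ F} ∪ {ω | X s ω ∈ G}) := measure_mono hsub
      _ ≤ P {ω | X s ω ∈ F} + P {ω | X s ω ∈ G} := measure_union_le _ _
      _ ≤ P {ω | X s ω ∈ F} + (G.card : ℝ≥0∞) / κ := by
          gcongr
          exact aux_upper P X hunif s G hGF
  have hFle : F.card ≤ n.choose 2 := hcardP ▸ Finset.card_le_card hFP
  have hGval : (G.card : ℝ≥0∞) / κ = 1 - (F.card : ℝ≥0∞) / κ := by
    have hadd : (G.card : ℝ≥0∞) / κ + (F.card : ℝ≥0∞) / κ = 1 := by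
      rw [ENNReal.div_add_div_same, ← Nat.cast_add, hGcard,
        (by omega : n.choose 2 - F.card + F.card = n.choose 2)]
      exact ENNReal.div_self hκ0 hκt
    exact ENNReal.eq_sub_of_add_eq (by simp [ENNReal.div_eq_top, hκ0, hκt]) hadd
  rw [hGval] at hcover
  have := tsub_le_iff_right.2 hcover
  rwa [ENNReal.sub_sub_cancel ENNReal.one_ne_top
    (by
      rw [show (1:ℝ≥0∞) = κ / κ from (ENNReal.div_self hκ0 hκt).symm]
      exact ENNReal.div_le_div (by rw [hκ]; exact_mod_cast hFle) le_rfl)] at this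

lemma aux_cyl
    (hiid : iIndepFun X P)
    (hone : ∀ (s : ℕ) (F : Finset (Finset (Fin n))), (∀ q ∈ F, q.card = 2) →
      P {ω | X s ω ∈ F} = F.card / (n.choose 2 : ℝ≥0∞))
    (t : ℕ) (G : ℕ → Finset (Finset (Fin n))) (hG : ∀ i, ∀ q ∈ G i, q.card = 2) :
    P (⋂ i ∈ Finset.Ioc 0 t, X i ⁻¹' ↑(G i)) =
      ∏ i ∈ Finset.Ioc 0 t, ((G i).card : ℝ≥0∞) / (n.choose 2 : ℝ≥0∞) := by
  rw [hiid.measure_inter_preimage_eq_mul (Finset.Ioc 0 t)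
    (fun i _ => (Set.to_countable _).measurableSet)]
  refine Finset.prod_congr rfl fun i _ => ?_
  have : X i ⁻¹' ↑(G i) = {ω | X i ω ∈ G i} := by ext ω; simp
  rw [this, hone i (G i) (hG i)]

end Aux

lemma aux_prod_good (t' : ℕ) (f : ℕ → ℝ≥0∞) (A B : ℝ≥0∞)
    (hA : f (t'+1) = A) (hB : ∀ i, 0 < i → i ≤ t' → f i = B) :
    ∏ i ∈ Finset.Ioc 0 (t'+1), f i = B ^ t' * A := by
  rw [← Finset.prod_Ioc_consecutive _ (Nat.zero_le t') (Nat.le_succ t'),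
    Nat.Ioc_succ_singleton, Finset.prod_singleton, hA]
  congr 1
  rw [Finset.prod_congr rfl (fun i hi => hB i (Finset.mem_Ioc.1 hi).1 (Finset.mem_Ioc.1 hi).2),
    Finset.prod_const, Nat.card_Ioc]
  simp

lemma aux_prod_bad (u' k : ℕ) (f : ℕ → ℝ≥0∞) (A B H N : ℝ≥0∞)
    (hA : f (u'+k+2) = A) (hH : f (u'+1) = H)
    (hB : ∀ i, 0 < i → i ≤ u' → f i = B)
    (hN : ∀ i, u'+1 < i → i ≤ u'+k+1 → f i = N) :
    ∏ i ∈ Finset.Ioc 0 (u'+k+2), f i = B ^ u' * H * N ^ k * A := by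
  rw [show u'+k+2 = (u'+k+1)+1 by ring] at hA ⊢
  rw [← Finset.prod_Ioc_consecutive _ (Nat.zero_le (u'+k+1)) (Nat.le_succ _),
    Nat.Ioc_succ_singleton, Finset.prod_singleton, hA,
    ← Finset.prod_Ioc_consecutive _ (by omega : 0 ≤ u'+1) (by omega : u'+1 ≤ u'+k+1),
    ← Finset.prod_Ioc_consecutive _ (Nat.zero_le u') (Nat.le_succ u'),
    Nat.Ioc_succ_singleton, Finset.prod_singleton, hH]
  congr 2
  · rw [Finset.prod_congr rfl (fun i hi => hB i (Finset.mem_Ioc.1 hi).1 (Finset.mem_Ioc.1 hi).2),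
      Finset.prod_const, Nat.card_Ioc]
    simp
  · rw [Finset.prod_congr rfl (fun i hi => hN i (Finset.mem_Ioc.1 hi).1 (Finset.mem_Ioc.1 hi).2),
      Finset.prod_const, Nat.card_Ioc]
    congr 1
    omega

lemma aux_sums (m : ℕ) :
    (∑' t' : ℕ, ((m:ℝ≥0∞)+1) * (((m.choose 2 : ℕ):ℝ≥0∞)/((m+2).choose 2 : ℝ≥0∞))^t' *
        (1/((m+2).choose 2 : ℝ≥0∞)) = ((m:ℝ≥0∞)+1)/(2*(m:ℝ≥0∞)+1)) ∧
    (∑' uk : ℕ × ℕ, ((m:ℝ≥0∞)+1) *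
        ((((m.choose 2 : ℕ):ℝ≥0∞)/((m+2).choose 2 : ℝ≥0∞))^uk.1 *
          ((m:ℝ≥0∞)/((m+2).choose 2 : ℝ≥0∞)) *
          ((((m.choose 2 : ℕ):ℝ≥0∞)+(m:ℝ≥0∞))/((m+2).choose 2 : ℝ≥0∞))^uk.2 *
          (1/((m+2).choose 2 : ℝ≥0∞)))
      = (m:ℝ≥0∞)/(2*(m:ℝ≥0∞)+1)) ∧
    ((m:ℝ≥0∞)+1)/(2*(m:ℝ≥0∞)+1) + (m:ℝ≥0∞)/(2*(m:ℝ≥0∞)+1) = 1 ∧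
    ((((m.choose 2 : ℕ):ℝ≥0∞)+(m:ℝ≥0∞))/((m+2).choose 2 : ℝ≥0∞)) < 1 := by
  have hchoose : (m+2).choose 2 = m.choose 2 + (2*m+1) := by
    simp [Nat.choose_succ_succ, Nat.choose_one_right]; ring
  set κ : ℝ≥0∞ := ((m+2).choose 2 : ℝ≥0∞) with hκdef
  set e : ℝ≥0∞ := ((m.choose 2 : ℕ) : ℝ≥0∞) with hedef
  have hκ0 : κ ≠ 0 := Nat.cast_ne_zero.2 (by omega)
  have hκt : κ ≠ ⊤ := ENNReal.natCast_ne_top _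
  have het : e ≠ ⊤ := ENNReal.natCast_ne_top _
  have hm1 : ((m:ℝ≥0∞)+1) ≠ 0 := (lt_of_lt_of_le zero_lt_one le_add_self).ne'
  have hm1t : ((m:ℝ≥0∞)+1) ≠ ⊤ := by simp
  have h2m1 : (2*(m:ℝ≥0∞)+1) ≠ 0 := (lt_of_lt_of_le zero_lt_one le_add_self).ne'
  have h2m1t : (2*(m:ℝ≥0∞)+1) ≠ ⊤ :=
    ENNReal.add_ne_top.2 ⟨ENNReal.mul_ne_top ENNReal.ofNat_ne_top (ENNReal.natCast_ne_top m),
      ENNReal.one_ne_top⟩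
  have hκeq : κ = e + (2*(m:ℝ≥0∞)+1) := by push_cast [hκdef, hedef, hchoose]; ring
  have hA : ∀ x y : ℝ≥0∞, (x/κ) * (κ/y) = x/y := by
    intro x y
    rw [div_eq_mul_inv, div_eq_mul_inv, div_eq_mul_inv, show x * κ⁻¹ * (κ * y⁻¹) =
      x * (κ⁻¹ * κ) * y⁻¹ by ring, ENNReal.inv_mul_cancel hκ0 hκt, mul_one]
  have hsub1 : (1 : ℝ≥0∞) - e/κ = (2*(m:ℝ≥0∞)+1)/κ := by
    refine (ENNReal.eq_sub_of_add_eq (by simp [ENNReal.div_eq_top, hκ0, hκt, het]) ?_).symm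
    rw [ENNReal.div_add_div_same, add_comm, ← hκeq, ENNReal.div_self hκ0 hκt]
  have hsub2 : (1 : ℝ≥0∞) - (e+(m:ℝ≥0∞))/κ = ((m:ℝ≥0∞)+1)/κ := by
    refine (ENNReal.eq_sub_of_add_eq (by simp [ENNReal.div_eq_top, hκ0, hκt, het]) ?_).symm
    rw [ENNReal.div_add_div_same, show (m:ℝ≥0∞)+1 + (e+(m:ℝ≥0∞)) = e + (2*↑m+1) by ring,
      ← hκeq, ENNReal.div_self hκ0 hκt]
  have hinv1 : ((1 : ℝ≥0∞) - e/κ)⁻¹ = κ/(2*(m:ℝ≥0∞)+1) := by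
    rw [hsub1, ENNReal.inv_div (Or.inr h2m1t) (Or.inr h2m1)]
  have hinv2 : ((1 : ℝ≥0∞) - (e+(m:ℝ≥0∞))/κ)⁻¹ = κ/((m:ℝ≥0∞)+1) := by
    rw [hsub2, ENNReal.inv_div (Or.inr hm1t) (Or.inr hm1)]
  refine ⟨?_, ?_, ?_, ?_⟩
  · calc ∑' t' : ℕ, ((m:ℝ≥0∞)+1) * (e/κ)^t' * (1/κ)
        = ∑' t' : ℕ, (((m:ℝ≥0∞)+1) * (1/κ)) * (e/κ)^t' := by
          refine tsum_congr fun t' => by ring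
      _ = (((m:ℝ≥0∞)+1) * (1/κ)) * (1 - e/κ)⁻¹ := by
          rw [ENNReal.tsum_mul_left, ENNReal.tsum_geometric]
      _ = (((m:ℝ≥0∞)+1)/κ) * (κ/(2*(m:ℝ≥0∞)+1)) := by rw [hinv1, mul_one_div]
      _ = ((m:ℝ≥0∞)+1)/(2*(m:ℝ≥0∞)+1) := hA _ _
  · calc ∑' uk : ℕ × ℕ, ((m:ℝ≥0∞)+1) *
          ((e/κ)^uk.1 * ((m:ℝ≥0∞)/κ) * ((e+(m:ℝ≥0∞))/κ)^uk.2 * (1/κ))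
        = ∑' u' : ℕ, ∑' k : ℕ, (((m:ℝ≥0∞)+1) * ((m:ℝ≥0∞)/κ) * (1/κ) * (e/κ)^u') *
            ((e+(m:ℝ≥0∞))/κ)^k := by
          rw [ENNReal.tsum_prod']
          exact tsum_congr fun u' => tsum_congr fun k => by ring
      _ = ∑' u' : ℕ, (((m:ℝ≥0∞)+1) * ((m:ℝ≥0∞)/κ) * (1/κ) * (1 - (e+(m:ℝ≥0∞))/κ)⁻¹) *
            (e/κ)^u' := by
          refine tsum_congr fun u' => ?_
          rw [ENNReal.tsum_mul_left, ENNReal.tsum_geometric]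
          ring
      _ = ((m:ℝ≥0∞)+1) * ((m:ℝ≥0∞)/κ) * (1/κ) * (1 - (e+(m:ℝ≥0∞))/κ)⁻¹ * (1 - e/κ)⁻¹ := by
          rw [ENNReal.tsum_mul_left, ENNReal.tsum_geometric]
      _ = ((m:ℝ≥0∞)/κ) * (κ/(2*(m:ℝ≥0∞)+1)) * (((m:ℝ≥0∞)+1) * (1/κ) * (κ/((m:ℝ≥0∞)+1))) := by
          rw [hinv1, hinv2]; ring
      _ = (m:ℝ≥0∞)/(2*(m:ℝ≥0∞)+1) := by
          rw [hA, mul_one_div, hA, ENNReal.div_self hm1 hm1t, mul_one]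
  · rw [ENNReal.div_add_div_same, show (m:ℝ≥0∞)+1+(m:ℝ≥0∞) = 2*(m:ℝ≥0∞)+1 by ring,
      ENNReal.div_self h2m1 h2m1t]
  · rw [ENNReal.div_lt_iff (Or.inl hκ0) (Or.inl hκt), one_mul, hκeq]
    refine ENNReal.add_lt_add_left het ?_
    refine lt_of_le_of_lt (by rw [two_mul]; exact le_add_self : (m:ℝ≥0∞) ≤ 2*(m:ℝ≥0∞)) ?_
    exact ENNReal.lt_add_right (ENNReal.mul_ne_top ENNReal.ofNat_ne_top (ENNReal.natCast_ne_top m))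
      one_ne_zero

/-- Under a uniform random scheduler selecting i.i.d. uniformly random 2-element
subsets of `Fin n` at each step `t ≥ 1`, the probability that at a fixed agent `a`'s
first interaction its partner pair is disjoint from all earlier interaction pairs
equals `(n−1)/(2n−3) > 1/2`. -/
theorem stmt1 (n : ℕ) (hn : 2 ≤ n)
    {Ω : Type*} [MeasurableSpace Ω] (P : Measure Ω) [IsProbabilityMeasure P]
    [MeasurableSpace (Finset (Fin n))] [MeasurableSingletonClass (Finset (Fin n))]
    (X : ℕ → Ω → Finset (Fin n))
    (hiid : iIndepFun X P)
    (hcard : ∀ t ω, (X t ω).card = 2)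
    (hunif : ∀ t (s : Finset (Fin n)), s.card = 2 →
      P {ω | X t ω = s} = 1 / (n.choose 2 : ℝ≥0∞))
    (a : Fin n)
    (T : Ω → ℕ) (hT : ∀ ω, T ω = sInf {t | 1 ≤ t ∧ a ∈ X t ω}) :
    P {ω | (∃ t, 1 ≤ t ∧ a ∈ X t ω) ∧
        ∀ s, 1 ≤ s → s < T ω → X s ω ∩ X (T ω) ω = ∅} =
      ((n : ℝ≥0∞) - 1) / (2 * (n : ℝ≥0∞) - 3) ∧
    ((n : ℝ≥0∞) - 1) / (2 * (n : ℝ≥0∞) - 3) > 1 / 2 := by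
  obtain ⟨m, rfl⟩ : ∃ m, n = m + 2 := ⟨n - 2, by omega⟩
  have hchoose : (m+2).choose 2 = m.choose 2 + (2*m+1) := by
    simp [Nat.choose_succ_succ, Nat.choose_one_right]; ring
  have hn0 : (m+2).choose 2 ≠ 0 := by omega
  set κ : ℝ≥0∞ := (((m+2).choose 2 : ℕ) : ℝ≥0∞) with hκdef
  have hRHS : (((m+2:ℕ) : ℝ≥0∞) - 1) / (2 * ((m+2:ℕ) : ℝ≥0∞) - 3)
      = ((m:ℝ≥0∞)+1)/(2*(m:ℝ≥0∞)+1) := by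
    have h1 : ((m+2:ℕ) : ℝ≥0∞) - 1 = (m:ℝ≥0∞) + 1 := by
      push_cast
      rw [show (m:ℝ≥0∞) + 2 = ((m:ℝ≥0∞)+1) + 1 by ring,
        ENNReal.add_sub_cancel_right ENNReal.one_ne_top]
    have h2 : 2 * ((m+2:ℕ) : ℝ≥0∞) - 3 = 2*(m:ℝ≥0∞) + 1 := by
      push_cast
      rw [show 2 * ((m:ℝ≥0∞) + 2) = (2*(m:ℝ≥0∞)+1) + 3 by ring,
        ENNReal.add_sub_cancel_right (by norm_num)]
    rw [h1, h2]
  rw [hRHS]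
  -- the second conjunct
  have hineq : ((m:ℝ≥0∞)+1)/(2*(m:ℝ≥0∞)+1) > 1 / 2 := by
    have h2m1 : (2*(m:ℝ≥0∞)+1) ≠ 0 := (lt_of_lt_of_le zero_lt_one le_add_self).ne'
    have h2m1t : (2*(m:ℝ≥0∞)+1) ≠ ⊤ :=
      ENNReal.add_ne_top.2 ⟨ENNReal.mul_ne_top ENNReal.ofNat_ne_top (ENNReal.natCast_ne_top m),
        ENNReal.one_ne_top⟩
    rw [gt_iff_lt, ENNReal.lt_div_iff_mul_lt (Or.inl h2m1) (Or.inl h2m1t), one_div,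
      mul_comm, ← div_eq_mul_inv,
      ENNReal.div_lt_iff (Or.inl (by norm_num)) (Or.inl ENNReal.ofNat_ne_top)]
    calc 2*(m:ℝ≥0∞)+1 < 2*(m:ℝ≥0∞)+2 := by
          exact ENNReal.add_lt_add_left
            (ENNReal.mul_ne_top ENNReal.ofNat_ne_top (ENNReal.natCast_ne_top m)) (by norm_num)
      _ = ((m:ℝ≥0∞)+1) * 2 := by ring
  refine ⟨?_, hineq⟩
  -- combinatorial sets
  set Dp : Finset (Fin (m+2)) → Finset (Finset (Fin (m+2))) :=
    fun p => (Finset.univ \ p).powersetCard 2 with hDpdef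
  set Na : Finset (Finset (Fin (m+2))) := (Finset.univ.erase a).powersetCard 2 with hNadef
  set Hp : Finset (Fin (m+2)) → Finset (Finset (Fin (m+2))) := fun p => Na \ Dp p with hHpdef
  set pairsA : Finset (Finset (Fin (m+2))) :=
    (Finset.univ.erase a).image (fun b => insert a ({b} : Finset (Fin (m+2)))) with hpairsdef
  have hDp_mem : ∀ p q, q ∈ Dp p ↔ q.card = 2 ∧ q ∩ p = ∅ := by
    intro p q
    simp [hDpdef, Finset.mem_powersetCard, Finset.subset_sdiff,
      Finset.disjoint_iff_inter_eq_empty, and_comm]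
  have hNa_mem : ∀ q, q ∈ Na ↔ q.card = 2 ∧ a ∉ q := by
    intro q
    simp [hNadef, Finset.mem_powersetCard, Finset.subset_erase, and_comm]
  have hpairs_mem : ∀ p, p ∈ pairsA ↔ p.card = 2 ∧ a ∈ p := by
    intro p
    constructor
    · rintro hp
      simp only [hpairsdef, Finset.mem_image, Finset.mem_erase] at hp
      obtain ⟨b, ⟨hb, -⟩, rfl⟩ := hp
      constructor
      · rw [Finset.card_insert_of_notMem (by simp [Ne.symm hb])]; simp
      · simp
    · rintro ⟨hp2, hap⟩
      obtain ⟨x, y, hxy, rfl⟩ := Finset.card_eq_two.1 hp2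
      simp only [hpairsdef, Finset.mem_image, Finset.mem_erase]
      rcases Finset.mem_insert.1 hap with rfl | h
      · exact ⟨y, ⟨Ne.symm hxy, Finset.mem_univ _⟩, rfl⟩
      · rw [Finset.mem_singleton] at h
        subst h
        exact ⟨x, ⟨hxy, Finset.mem_univ _⟩, by rw [Finset.pair_comm]⟩
  have hHp_mem : ∀ p q, q ∈ Hp p ↔ q.card = 2 ∧ a ∉ q ∧ q ∩ p ≠ ∅ := by
    intro p q
    rw [hHpdef]
    simp only [Finset.mem_sdiff, hNa_mem, hDp_mem]
    tauto
  have hDp_card : ∀ p, p.card = 2 → (Dp p).card = m.choose 2 := by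
    intro p hp
    rw [hDpdef]
    rw [Finset.card_powersetCard, Finset.card_sdiff_of_subset (Finset.subset_univ p), hp]
    simp
  have hNa_card : Na.card = m.choose 2 + m := by
    rw [hNadef, Finset.card_powersetCard, Finset.card_erase_of_mem (Finset.mem_univ a)]
    simp [Nat.choose_succ_succ, Nat.choose_one_right]
    ring
  have hHp_card : ∀ p, p ∈ pairsA → (Hp p).card = m := by
    intro p hp
    obtain ⟨hp2, hap⟩ := (hpairs_mem p).1 hp
    have hsub : Dp p ⊆ Na := by
      intro q hq
      obtain ⟨hq2, hqp⟩ := (hDp_mem p q).1 hq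
      refine (hNa_mem q).2 ⟨hq2, fun haq => ?_⟩
      have : a ∈ q ∩ p := Finset.mem_inter.2 ⟨haq, hap⟩
      simp [hqp] at this
    rw [hHpdef]
    rw [Finset.card_sdiff_of_subset hsub, hNa_card, hDp_card p hp2]
    omega
  have hpairs_card : pairsA.card = m+1 := by
    rw [hpairsdef, Finset.card_image_of_injOn, Finset.card_erase_of_mem (Finset.mem_univ a)]
    · simp
    · intro b hb b' hb' h
      simp only [] at h
      have : b ∈ insert a ({b'} : Finset (Fin (m+2))) := by
        rw [← h]; exact Finset.mem_insert_of_mem (Finset.mem_singleton_self b)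
      rcases Finset.mem_insert.1 this with rfl | hbs
      · exact absurd rfl (Finset.mem_erase.1 hb).1
      · exact Finset.mem_singleton.1 hbs
  -- probability tools
  have hone := aux_one P X hn0 hcard hunif
  have hcyl := aux_cyl P X hiid hone
  -- good cylinders
  set GG : ℕ → Finset (Fin (m+2)) → Set Ω := fun t p =>
    ⋂ i ∈ Finset.Ioc 0 t, X i ⁻¹' ↑(if i = t then ({p} : Finset (Finset (Fin (m+2)))) else Dp p)
    with hGGdef
  have hGG_mem : ∀ t p ω, ω ∈ GG t p ↔ ∀ i, 0 < i → i ≤ t →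
      X i ω ∈ (if i = t then ({p} : Finset (Finset (Fin (m+2)))) else Dp p) := by
    intro t p ω
    simp [hGGdef, Set.mem_iInter, Finset.mem_Ioc]
  have hgood_meas : ∀ (t' : ℕ) (p : Finset (Fin (m+2))), p ∈ pairsA →
      P (GG (t'+1) p) = (((m.choose 2 : ℕ):ℝ≥0∞)/κ)^t' * (1/κ) := by
    intro t' p hp
    have hp2 : p.card = 2 := ((hpairs_mem p).1 hp).1
    have hGok : ∀ i, ∀ q ∈ (if i = t'+1 then ({p} : Finset (Finset (Fin (m+2)))) else Dp p),
        q.card = 2 := by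
      intro i q hq
      by_cases h : i = t'+1
      · rw [if_pos h] at hq
        rw [Finset.mem_singleton.1 hq]
        exact hp2
      · rw [if_neg h] at hq
        exact ((hDp_mem p q).1 hq).1
    rw [hGGdef]
    simp only []
    rw [hcyl (t'+1) (fun i => if i = t'+1 then ({p} : Finset (Finset (Fin (m+2)))) else Dp p) hGok]
    rw [aux_prod_good t'
      (fun i => (((if i = t'+1 then ({p} : Finset (Finset (Fin (m+2)))) else Dp p).card : ℕ):ℝ≥0∞)
        / ((m+2).choose 2 : ℝ≥0∞))
      (1/κ) (((m.choose 2 : ℕ):ℝ≥0∞)/κ) ?_ ?_]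
    · simp [hκdef]
    · intro i hi0 hit
      have hc : ¬(i = t'+1) := by omega
      simp [hc, hDp_card p hp2, hκdef]
  -- bad cylinders
  set BS : ℕ → ℕ → Finset (Fin (m+2)) → ℕ → Finset (Finset (Fin (m+2))) := fun u' k p i =>
    if i = u'+k+2 then {p} else if i = u'+1 then Hp p else if i ≤ u' then Dp p else Na
    with hBSdef
  set BB : ℕ → ℕ → Finset (Fin (m+2)) → Set Ω := fun u' k p =>
    ⋂ i ∈ Finset.Ioc 0 (u'+k+2), X i ⁻¹' ↑(BS u' k p i) with hBBdef
  have hbad_meas : ∀ (u' k : ℕ) (p : Finset (Fin (m+2))), p ∈ pairsA →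
      P (BB u' k p) = (((m.choose 2 : ℕ):ℝ≥0∞)/κ)^u' * ((m:ℝ≥0∞)/κ) *
        ((((m.choose 2 : ℕ):ℝ≥0∞)+(m:ℝ≥0∞))/κ)^k * (1/κ) := by
    intro u' k p hp
    have hp2 : p.card = 2 := ((hpairs_mem p).1 hp).1
    have hGok : ∀ i, ∀ q ∈ BS u' k p i, q.card = 2 := by
      intro i q hq
      rw [hBSdef] at hq
      simp only [] at hq
      split at hq
      · rw [Finset.mem_singleton.1 hq]; exact hp2
      · split at hq
        · exact ((hHp_mem p q).1 hq).1
        · split at hq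
          · exact ((hDp_mem p q).1 hq).1
          · exact ((hNa_mem q).1 hq).1
    rw [hBBdef]
    simp only []
    rw [hcyl (u'+k+2) (BS u' k p) hGok]
    rw [aux_prod_bad u' k
      (fun i => (((BS u' k p i).card : ℕ):ℝ≥0∞) / ((m+2).choose 2 : ℝ≥0∞))
      (1/κ) (((m.choose 2 : ℕ):ℝ≥0∞)/κ) ((m:ℝ≥0∞)/κ)
      ((((m.choose 2 : ℕ):ℝ≥0∞)+(m:ℝ≥0∞))/κ) ?_ ?_ ?_ ?_]
    · simp [hBSdef, hκdef]
    · have hc1 : ¬(u'+1 = u'+k+2) := by omega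
      simp only [hBSdef, if_neg hc1, ↓reduceIte]; simp [hHp_card p hp, hκdef]
    · intro i hi0 hit
      have hc1 : ¬(i = u'+k+2) := by omega
      have hc2 : ¬(i = u'+1) := by omega
      simp [hBSdef, hc1, hc2, hit, hDp_card p hp2, hκdef]
    · intro i hi1 hit
      have hc1 : ¬(i = u'+k+2) := by omega
      have hc2 : ¬(i = u'+1) := by omega
      have hc3 : ¬(i ≤ u') := by omega
      simp [hBSdef, hc1, hc2, hc3, hNa_card, hκdef]
  -- the target event
  set E : Set Ω := {ω | (∃ t, 1 ≤ t ∧ a ∈ X t ω) ∧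
      ∀ s, 1 ≤ s → s < T ω → X s ω ∩ X (T ω) ω = ∅} with hEdef
  have hno : ∀ (q p : Finset (Fin (m+2))), a ∈ p → q ∩ p = ∅ → a ∉ q := by
    intro q p hap h haq
    have : a ∈ q ∩ p := Finset.mem_inter.2 ⟨haq, hap⟩
    simp [h] at this
  have hE_eq : E = ⋃ t' : ℕ, ⋃ p ∈ pairsA, GG (t'+1) p := by
    ext ω
    simp only [hEdef, Set.mem_setOf_eq, Set.mem_iUnion]
    constructor
    · rintro ⟨⟨t0, ht0, hat0⟩, hdisj⟩
      have hS : {t | 1 ≤ t ∧ a ∈ X t ω}.Nonempty := ⟨t0, ht0, hat0⟩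
      have hTmem : T ω ∈ {t | 1 ≤ t ∧ a ∈ X t ω} := by rw [hT ω]; exact Nat.sInf_mem hS
      obtain ⟨hT1, hTa⟩ := hTmem
      refine ⟨T ω - 1, X (T ω) ω, (hpairs_mem _).2 ⟨hcard _ ω, hTa⟩, ?_⟩
      have htt : T ω - 1 + 1 = T ω := by omega
      rw [hGG_mem]
      intro i hi0 hit
      by_cases hi : i = T ω - 1 + 1
      · rw [if_pos hi, Finset.mem_singleton, hi, htt]
      · rw [if_neg hi]
        exact (hDp_mem _ _).2 ⟨hcard i ω, hdisj i hi0 (by omega)⟩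
    · rintro ⟨t', p, hp, hmem⟩
      rw [hGG_mem] at hmem
      obtain ⟨hp2, hap⟩ := (hpairs_mem p).1 hp
      have hXt : X (t'+1) ω = p := by
        have := hmem (t'+1) (by omega) le_rfl
        rw [if_pos rfl] at this
        exact Finset.mem_singleton.1 this
      have hbefore : ∀ i, 0 < i → i < t'+1 → X i ω ∩ p = ∅ := by
        intro i hi0 hit
        have := hmem i hi0 (by omega)
        rw [if_neg (by omega)] at this
        exact ((hDp_mem _ _).1 this).2
      have hTeq : T ω = t'+1 := by
        rw [hT ω]
        refine le_antisymm (Nat.sInf_le ⟨by omega, by rw [hXt]; exact hap⟩) ?_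
        by_contra hlt
        push_neg at hlt
        have hne : {t | 1 ≤ t ∧ a ∈ X t ω}.Nonempty :=
          ⟨t'+1, by omega, by rw [hXt]; exact hap⟩
        obtain ⟨h1, h2⟩ := Nat.sInf_mem hne
        exact hno _ _ hap (hbefore _ h1 hlt) h2
      refine ⟨⟨t'+1, by omega, by rw [hXt]; exact hap⟩, fun s hs1 hs2 => ?_⟩
      rw [hTeq] at hs2 ⊢
      rw [hXt]
      exact hbefore s hs1 hs2
  obtain ⟨hsum1, hsum2, hsum3, hlt1⟩ := aux_sums m
  have h2m1 : (2*(m:ℝ≥0∞)+1) ≠ 0 := (lt_of_lt_of_le zero_lt_one le_add_self).ne'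
  have h2m1t : (2*(m:ℝ≥0∞)+1) ≠ ⊤ :=
    ENNReal.add_ne_top.2 ⟨ENNReal.mul_ne_top ENNReal.ofNat_ne_top (ENNReal.natCast_ne_top m),
      ENNReal.one_ne_top⟩
  -- upper bound
  have hup : P E ≤ ((m:ℝ≥0∞)+1)/(2*(m:ℝ≥0∞)+1) := by
    rw [hE_eq]
    calc P (⋃ t' : ℕ, ⋃ p ∈ pairsA, GG (t'+1) p)
        ≤ ∑' t' : ℕ, P (⋃ p ∈ pairsA, GG (t'+1) p) := measure_iUnion_le _
      _ ≤ ∑' t' : ℕ, ∑ p ∈ pairsA, P (GG (t'+1) p) :=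
          ENNReal.tsum_le_tsum fun t' => measure_biUnion_finset_le _ _
      _ = ∑' t' : ℕ, ((m:ℝ≥0∞)+1) * (((m.choose 2 : ℕ):ℝ≥0∞)/κ)^t' * (1/κ) := by
          refine tsum_congr fun t' => ?_
          rw [Finset.sum_congr rfl (fun p hp => hgood_meas t' p hp), Finset.sum_const,
            hpairs_card, nsmul_eq_mul]
          push_cast
          ring
      _ = ((m:ℝ≥0∞)+1)/(2*(m:ℝ≥0∞)+1) := hsum1
  -- the never-interacting event
  set Z : Set Ω := {ω | ∀ t, 1 ≤ t → a ∉ X t ω} with hZdef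
  have hZ0 : P Z = 0 := by
    have hZK : ∀ K : ℕ, P Z ≤ ((((m.choose 2 : ℕ):ℝ≥0∞)+(m:ℝ≥0∞))/κ)^K := by
      intro K
      have hsub : Z ⊆ ⋂ i ∈ Finset.Ioc 0 K, X i ⁻¹' ↑Na := by
        intro ω hω
        simp only [Set.mem_iInter, Set.mem_preimage, Finset.mem_coe]
        intro i hi
        obtain ⟨hi0, hiK⟩ := Finset.mem_Ioc.1 hi
        exact (hNa_mem _).2 ⟨hcard i ω, hω i (by omega)⟩
      calc P Z ≤ P (⋂ i ∈ Finset.Ioc 0 K, X i ⁻¹' ↑Na) := measure_mono hsub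
        _ = ∏ i ∈ Finset.Ioc 0 K, (Na.card : ℝ≥0∞)/κ :=
            hcyl K (fun _ => Na) (fun i q hq => ((hNa_mem q).1 hq).1)
        _ = ((((m.choose 2 : ℕ):ℝ≥0∞)+(m:ℝ≥0∞))/κ)^K := by
            rw [Finset.prod_const, Nat.card_Ioc, hNa_card]
            push_cast
            simp
    refine le_antisymm ?_ (by simp)
    exact ge_of_tendsto (ENNReal.tendsto_pow_atTop_nhds_zero_of_lt_one hlt1)
      (Filter.Eventually.of_forall hZK)
  -- complement covering
  have hEc_sub : Eᶜ ⊆ Z ∪ ⋃ uk : ℕ × ℕ, ⋃ p ∈ pairsA, BB uk.1 uk.2 p := by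
    intro ω hω
    simp only [hEdef, Set.mem_compl_iff, Set.mem_setOf_eq, not_and] at hω
    by_cases hA : ∃ t, 1 ≤ t ∧ a ∈ X t ω
    · right
      have hB := hω hA
      push_neg at hB
      obtain ⟨s0, hs01, hs0T, hs0ne⟩ := hB
      have hs0ne : X s0 ω ∩ X (T ω) ω ≠ ∅ := by simpa [Finset.nonempty_iff_ne_empty] using hs0ne
      have hS : {t | 1 ≤ t ∧ a ∈ X t ω}.Nonempty := hA
      have hTmem : T ω ∈ {t | 1 ≤ t ∧ a ∈ X t ω} := by rw [hT ω]; exact Nat.sInf_mem hS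
      obtain ⟨hT1, hTa⟩ := hTmem
      have hTmin : ∀ i, 1 ≤ i → i < T ω → a ∉ X i ω := by
        intro i h1 h2 hai
        rw [hT ω] at h2
        exact (Nat.notMem_of_lt_sInf h2) ⟨h1, hai⟩
      have hU : {s | 1 ≤ s ∧ X s ω ∩ X (T ω) ω ≠ ∅}.Nonempty := ⟨s0, hs01, hs0ne⟩
      set u := sInf {s | 1 ≤ s ∧ X s ω ∩ X (T ω) ω ≠ ∅} with hu
      obtain ⟨hu1, hune⟩ := Nat.sInf_mem hU
      have huT : u < T ω := lt_of_le_of_lt (Nat.sInf_le ⟨hs01, hs0ne⟩) hs0T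
      have humin : ∀ i, 1 ≤ i → i < u → X i ω ∩ X (T ω) ω = ∅ := by
        intro i h1 h2
        by_contra hne
        exact (Nat.notMem_of_lt_sInf h2) ⟨h1, hne⟩
      refine Set.mem_iUnion.2 ⟨(u-1, T ω - u - 1), Set.mem_iUnion₂.2
        ⟨X (T ω) ω, (hpairs_mem _).2 ⟨hcard _ _, hTa⟩, ?_⟩⟩
      have harith : u - 1 + (T ω - u - 1) + 2 = T ω := by omega
      rw [hBBdef]
      simp only [Set.mem_iInter, Set.mem_preimage, Finset.mem_coe, Finset.mem_Ioc]
      rintro i ⟨hi0, hit⟩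
      rw [harith] at hit
      rw [hBSdef]
      simp only []
      by_cases h1 : i = T ω
      · rw [if_pos (by omega)]
        rw [Finset.mem_singleton, h1]
      · rw [if_neg (by omega)]
        by_cases h2 : i = u
        · rw [if_pos (by omega)]
          subst h2
          exact (hHp_mem _ _).2 ⟨hcard _ _, hTmin _ hu1 huT, hune⟩
        · by_cases h3 : i < u
          · rw [if_neg (by omega), if_pos (by omega)]
            exact (hDp_mem _ _).2 ⟨hcard _ _, humin i hi0 h3⟩
          · rw [if_neg (by omega), if_neg (by omega)]
            exact (hNa_mem _).2 ⟨hcard _ _, hTmin i (by omega) (by omega)⟩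
    · left
      push_neg at hA
      exact fun t ht => hA t ht
  -- bad union bound
  have hbadsum : P (⋃ uk : ℕ × ℕ, ⋃ p ∈ pairsA, BB uk.1 uk.2 p)
      ≤ (m:ℝ≥0∞)/(2*(m:ℝ≥0∞)+1) := by
    calc P (⋃ uk : ℕ × ℕ, ⋃ p ∈ pairsA, BB uk.1 uk.2 p)
        ≤ ∑' uk : ℕ × ℕ, P (⋃ p ∈ pairsA, BB uk.1 uk.2 p) := measure_iUnion_le _
      _ ≤ ∑' uk : ℕ × ℕ, ∑ p ∈ pairsA, P (BB uk.1 uk.2 p) :=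
          ENNReal.tsum_le_tsum fun uk => measure_biUnion_finset_le _ _
      _ = ∑' uk : ℕ × ℕ, ((m:ℝ≥0∞)+1) *
          ((((m.choose 2 : ℕ):ℝ≥0∞)/κ)^uk.1 * ((m:ℝ≥0∞)/κ) *
            ((((m.choose 2 : ℕ):ℝ≥0∞)+(m:ℝ≥0∞))/κ)^uk.2 * (1/κ)) := by
          refine tsum_congr fun uk => ?_
          rw [Finset.sum_congr rfl (fun p hp => hbad_meas uk.1 uk.2 p hp), Finset.sum_const,
            hpairs_card, nsmul_eq_mul]
          push_cast
          ring
      _ = (m:ℝ≥0∞)/(2*(m:ℝ≥0∞)+1) := hsum2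
  -- lower bound
  have hmtop : (m:ℝ≥0∞)/(2*(m:ℝ≥0∞)+1) ≠ ⊤ := by
    simp [ENNReal.div_eq_top, h2m1, h2m1t]
  have hEc_le : P Eᶜ ≤ (m:ℝ≥0∞)/(2*(m:ℝ≥0∞)+1) := by
    calc P Eᶜ ≤ P (Z ∪ ⋃ uk : ℕ × ℕ, ⋃ p ∈ pairsA, BB uk.1 uk.2 p) := measure_mono hEc_sub
      _ ≤ P Z + P (⋃ uk : ℕ × ℕ, ⋃ p ∈ pairsA, BB uk.1 uk.2 p) := measure_union_le _ _
      _ ≤ 0 + (m:ℝ≥0∞)/(2*(m:ℝ≥0∞)+1) := add_le_add (le_of_eq hZ0) hbadsum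
      _ = (m:ℝ≥0∞)/(2*(m:ℝ≥0∞)+1) := zero_add _
  have h1 : (1:ℝ≥0∞) ≤ P E + P Eᶜ := by
    calc (1:ℝ≥0∞) = P Set.univ := measure_univ.symm
      _ = P (E ∪ Eᶜ) := by rw [Set.union_compl_self]
      _ ≤ P E + P Eᶜ := measure_union_le _ _
  have hlow : ((m:ℝ≥0∞)+1)/(2*(m:ℝ≥0∞)+1) ≤ P E := by
    calc ((m:ℝ≥0∞)+1)/(2*(m:ℝ≥0∞)+1) = 1 - (m:ℝ≥0∞)/(2*(m:ℝ≥0∞)+1) :=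
        ENNReal.eq_sub_of_add_eq hmtop hsum3
      _ ≤ 1 - P Eᶜ := tsub_le_tsub_left hEc_le 1
      _ ≤ P E := tsub_le_iff_right.2 h1
  exact le_antisymm hup hlow
end

section
/- Let k ≥ 1 and n ≥ 1, let I : Ω → (ZMod k)ⁿ be a random vector with arbitrary distribution, let r : Ω → ZMod k be uniform and independent of I, define m_j = r + ∑_{x=1}^{j} I_x for 0 ≤ j ≤ n (so m_0 = r) and λ = ∑_{x=1}^{n} I_x. Then for every index j with 1 ≤ j ≤ n, every i*, m*, λ* ∈ ZMod k and every I* ∈ (ZMod k)ⁿ with P(I_j = i*, m_{j−1} = m*, λ = λ*) > 0, it holds that P(I = I* | I_j = i*, m_{j−1} = m*, λ = λ*) = P(I = I* | I_j = i*, λ = λ*). -/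
open MeasureTheory ProbabilityTheory
open scoped ENNReal

/-- Information-theoretic privacy of RingRemainder: given agent `A_j`'s own input
`I_j`, the message `m_{j−1} = r + ∑_{x=1}^{j−1} I_x` it receives, and the output
`λ = ∑_{x=1}^{n} I_x`, conditioning additionally on the received message does not
change the conditional probability of any input vector. -/
theorem stmt4 (k n : ℕ) (hk : 1 ≤ k) (hn : 1 ≤ n)
    {Ω : Type*} [MeasurableSpace Ω] (P : Measure Ω) [IsProbabilityMeasure P]
    [MeasurableSpace (ZMod k)] [MeasurableSingletonClass (ZMod k)]
    [MeasurableSpace (Fin n → ZMod k)] [MeasurableSingletonClass (Fin n → ZMod k)]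
    (I : Ω → Fin n → ZMod k) (hI : Measurable I)
    (r : Ω → ZMod k) (hr : Measurable r)
    (hunif : ∀ z : ZMod k, P {ω | r ω = z} = 1 / (k : ℝ≥0∞))
    (hindep : IndepFun r I P)
    (j : Fin n) (istar mstar lstar : ZMod k) (Istar : Fin n → ZMod k)
    (hpos : P {ω | I ω j = istar ∧
        r ω + ∑ x ∈ Finset.univ.filter (fun x : Fin n => (x : ℕ) < (j : ℕ)), I ω x = mstar ∧
        (∑ x : Fin n, I ω x) = lstar} ≠ 0) :
    P[{ω | I ω = Istar} | {ω | I ω j = istar ∧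
        r ω + ∑ x ∈ Finset.univ.filter (fun x : Fin n => (x : ℕ) < (j : ℕ)), I ω x = mstar ∧
        (∑ x : Fin n, I ω x) = lstar}] =
    P[{ω | I ω = Istar} | {ω | I ω j = istar ∧ (∑ x : Fin n, I ω x) = lstar}] := by
  haveI : NeZero k := ⟨by omega⟩
  set g : (Fin n → ZMod k) → ZMod k := fun v =>
    mstar - ∑ x ∈ Finset.univ.filter (fun x : Fin n => (x : ℕ) < (j : ℕ)), v x with hg
  -- key lemma: intersecting an I-event with the message event scales measure by 1/k
  have key : ∀ A : Finset (Fin n → ZMod k),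
      P {ω | I ω ∈ A ∧ r ω = g (I ω)} = (1 / (k : ℝ≥0∞)) * P (I ⁻¹' ↑A) := by
    intro A
    have hdisj : (↑A : Set (Fin n → ZMod k)).PairwiseDisjoint
        (fun v => I ⁻¹' {v} ∩ r ⁻¹' {g v}) := by
      intro v _ w _ hvw
      refine Set.disjoint_left.2 fun ω hv hw => hvw ?_
      have h1 : I ω = v := hv.1
      have h2 : I ω = w := hw.1
      rw [← h1, h2]
    have hmeas : ∀ v : Fin n → ZMod k, MeasurableSet (I ⁻¹' {v} ∩ r ⁻¹' {g v}) :=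
      fun v => (hI (measurableSet_singleton v)).inter (hr (measurableSet_singleton (g v)))
    have h1 : {ω | I ω ∈ A ∧ r ω = g (I ω)} = ⋃ v ∈ A, (I ⁻¹' {v} ∩ r ⁻¹' {g v}) := by
      ext ω
      simp only [Set.mem_setOf_eq, Set.mem_iUnion, Set.mem_inter_iff, Set.mem_preimage,
        Set.mem_singleton_iff, exists_prop]
      constructor
      · rintro ⟨hA, hgω⟩
        exact ⟨I ω, hA, rfl, by rw [hgω]⟩
      · rintro ⟨v, hv, h1, h2⟩
        subst h1; exact ⟨hv, h2⟩
    have h2 : (I ⁻¹' ↑A) = ⋃ v ∈ A, I ⁻¹' {v} := by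
      ext ω; simp
    rw [h1, h2, measure_biUnion_finset hdisj (fun v _ => hmeas v),
      measure_biUnion_finset ?_ (fun v _ => hI (measurableSet_singleton v))]
    · rw [Finset.mul_sum]
      refine Finset.sum_congr rfl fun v _ => ?_
      rw [Set.inter_comm, hindep.measure_inter_preimage_eq_mul _ _
        (measurableSet_singleton (g v)) (measurableSet_singleton v)]
      have : r ⁻¹' {g v} = {ω | r ω = g v} := rfl
      rw [this, hunif (g v)]
    · intro v _ w _ hvw
      refine Set.disjoint_left.2 fun ω hv hw => hvw ?_
      have h1 : I ω = v := hv
      have h2 : I ω = w := hw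
      rw [← h1, h2]
  -- the two conditioning events, as finsets of vectors
  set A0 : Finset (Fin n → ZMod k) :=
    Finset.univ.filter (fun v => v j = istar ∧ (∑ x : Fin n, v x) = lstar) with hA0
  set A1 : Finset (Fin n → ZMod k) := A0.filter (fun v => v = Istar) with hA1
  have hE1 : {ω | I ω j = istar ∧
      r ω + ∑ x ∈ Finset.univ.filter (fun x : Fin n => (x : ℕ) < (j : ℕ)), I ω x = mstar ∧
      (∑ x : Fin n, I ω x) = lstar} = {ω | I ω ∈ A0 ∧ r ω = g (I ω)} := by
    ext ω
    simp only [Set.mem_setOf_eq, hA0, Finset.mem_filter, Finset.mem_univ, true_and, hg,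
      eq_sub_iff_add_eq, add_comm]
    tauto
  have hE2 : {ω | I ω j = istar ∧ (∑ x : Fin n, I ω x) = lstar} = I ⁻¹' ↑A0 := by
    ext ω
    simp [hA0]
  have hN1 : {ω | I ω j = istar ∧
      r ω + ∑ x ∈ Finset.univ.filter (fun x : Fin n => (x : ℕ) < (j : ℕ)), I ω x = mstar ∧
      (∑ x : Fin n, I ω x) = lstar} ∩ {ω | I ω = Istar}
      = {ω | I ω ∈ A1 ∧ r ω = g (I ω)} := by
    ext ω
    simp only [Set.mem_inter_iff, Set.mem_setOf_eq, hA1, hA0, Finset.mem_filter,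
      Finset.mem_univ, true_and, hg, eq_sub_iff_add_eq, add_comm]
    tauto
  have hN2 : {ω | I ω j = istar ∧ (∑ x : Fin n, I ω x) = lstar} ∩ {ω | I ω = Istar}
      = I ⁻¹' ↑A1 := by
    ext ω
    simp only [Set.mem_inter_iff, Set.mem_setOf_eq, Set.mem_preimage, Finset.coe_filter,
      hA1, hA0, Finset.mem_filter, Finset.mem_univ, true_and]
  have hmE1 : MeasurableSet {ω | I ω ∈ A0 ∧ r ω = g (I ω)} := by
    have h1 : {ω | I ω ∈ A0 ∧ r ω = g (I ω)} = ⋃ v ∈ A0, (I ⁻¹' {v} ∩ r ⁻¹' {g v}) := by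
      ext ω
      simp only [Set.mem_setOf_eq, Set.mem_iUnion, Set.mem_inter_iff, Set.mem_preimage,
        Set.mem_singleton_iff, exists_prop]
      constructor
      · rintro ⟨hA, hgω⟩
        exact ⟨I ω, hA, rfl, by rw [hgω]⟩
      · rintro ⟨v, hv, h1, h2⟩
        subst h1; exact ⟨hv, h2⟩
    rw [h1]
    exact MeasurableSet.biUnion (Set.to_countable _) fun v _ =>
      (hI (measurableSet_singleton v)).inter (hr (measurableSet_singleton (g v)))
  have hmE2 : MeasurableSet (I ⁻¹' (↑A0 : Set (Fin n → ZMod k))) :=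
    hI ((Set.to_countable _).measurableSet)
  have hknz : (1 / (k : ℝ≥0∞)) ≠ 0 := by
    simp [ENNReal.div_eq_inv_mul]
  have hkne : (1 / (k : ℝ≥0∞)) ≠ ⊤ := by
    simp only [one_div, ne_eq, ENNReal.inv_eq_top, Nat.cast_eq_zero]
    omega
  rw [hE1, hE2] at *
  rw [cond_apply hmE1, cond_apply hmE2, hN1, hN2, key A0, key A1]
  rw [ENNReal.mul_inv (Or.inl hknz) (Or.inl hkne), mul_assoc, ← mul_assoc (P (I ⁻¹' ↑A0))⁻¹,
    mul_comm (P (I ⁻¹' ↑A0))⁻¹ (1 / (k : ℝ≥0∞)), mul_assoc]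
  rw [← mul_assoc (1 / (k : ℝ≥0∞))⁻¹, ENNReal.inv_mul_cancel hknz hkne, one_mul]
end
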